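/- Let (φ,ψ): K → K′ be an isomorphism of Kähler–Poisson algebras with φ(P) = A P′ Aᵀ and P′ g′ P′ = P′ Aᵀ φ(g) A P′ (matrix identities over A′), where η P g P g P = -P and η′ P′ g′ P′ g′ P′ = -P′. Then (φ(η) - η′)·P′ = 0, i.e. φ(η) - η′ annihilates every entry {y^α, y^β}′ of P′. -/

import Mathlib

structure IsPoissonBracket {A : Type*} [CommRing A] (br : A → A → A) : Prop where
  add_left : ∀ a b c, br (a + b) c = br a c + br b c
  add_right : ∀ a b c, br a (b + c) = br a b + br a c
  antisymm : ∀ a b, br a b = - br b a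
  leibniz : ∀ a b c, br a (b * c) = br a b * c + b * br a c
  jacobi : ∀ a b c, br a (br b c) + br b (br c a) + br c (br a b) = 0

/-- for an isomorphism `(φ, ψ)` of Kähler–Poisson algebras, with
`φ(P) = A P' Aᵀ` and `P' g' P' = P' Aᵀ φ(g) A P'`, where `η P g P g P = -P` and
`η' P' g' P' g' P' = -P'`, one has `(φ(η) - η') • P' = 0`. The matrix
`A^i_α = ∂φ(xⁱ)/∂y^α` is encoded through the Leibniz-expansion hypotheses `hA`
(for `φ`) and `hB` (for `φ⁻¹`, using `φ(A_fin) = A'_fin`). -/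
theorem kp_iso_eta_matrix
    {A A' : Type*} [CommRing A] [CommRing A']
    (br : A → A → A) (br' : A' → A' → A')
    (hbr : IsPoissonBracket br) (hbr' : IsPoissonBracket br')
    {m m' : ℕ} (x : Fin m → A) (y : Fin m' → A')
    (g : Matrix (Fin m) (Fin m) A) (g' : Matrix (Fin m') (Fin m') A')
    (hg : g.IsSymm) (hg' : g'.IsSymm)
    (η : A) (η' : A')
    (P : Matrix (Fin m) (Fin m) A) (P' : Matrix (Fin m') (Fin m') A')
    (hP : ∀ i j, P i j = br (x i) (x j)) (hP' : ∀ a b, P' a b = br' (y a) (y b))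
    (hK : η • (P * g * P * g * P) = -P)
    (hK' : η' • (P' * g' * P' * g' * P') = -P')
    (φ : A ≃+* A') (hφ : ∀ a b, φ (br a b) = br' (φ a) (φ b))
    (Amat : Matrix (Fin m) (Fin m') A')
    (hA : ∀ (i : Fin m) (c : A'), br' (φ (x i)) c = ∑ α, Amat i α * br' (y α) c)
    (hPA : P.map φ = Amat * P' * Amat.transpose)
    (hcompat : P' * g' * P' = P' * Amat.transpose * (g.map φ) * Amat * P')
    (Bmat : Matrix (Fin m') (Fin m) A')
    (hB : ∀ (a : Fin m') (c : A'), br' (y a) c = ∑ i, Bmat a i * br' (φ (x i)) c) :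
    (φ η - η') • P' = 0 := by
  set Pφ : Matrix (Fin m) (Fin m) A' := P.map φ with hPφ
  set gφ : Matrix (Fin m) (Fin m) A' := g.map φ with hgφ
  -- φ applied entrywise to hK
  have hφK : (φ η) • (Pφ * gφ * Pφ * gφ * Pφ) = -Pφ := by
    ext i j
    have := congrArg φ (congrFun (congrFun hK i) j)
    simpa [hPφ, hgφ, Matrix.mul_apply, Matrix.map_apply, Matrix.smul_apply, smul_eq_mul,
      map_sum, map_mul, Finset.mul_sum] using this
  -- chain identity
  set X : Matrix (Fin m) (Fin m) A' :=
    Amat * (P' * g' * P' * g' * P') * Amat.transpose with hX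
  have key : ∀ M : Matrix (Fin m') (Fin m) A',
      P' * (Amat.transpose * (gφ * (Amat * (P' * M)))) = P' * (g' * (P' * M)) := by
    intro M
    have h := congrArg (· * M) hcompat
    simp only [Matrix.mul_assoc] at h
    exact h.symm
  have hchain : Pφ * gφ * Pφ * gφ * Pφ = X := by
    rw [hX, hPA]
    simp only [Matrix.mul_assoc]
    rw [key, key]
  have h2 : (φ η) • X = -(Amat * P' * Amat.transpose) := by
    rw [← hchain, hφK, hPA]
  have h3 : η' • X = -(Amat * P' * Amat.transpose) := by
    rw [hX]
    rw [show Amat * (P' * g' * P' * g' * P') * Amat.transpose =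
      Amat * (P' * g' * P' * g' * P') * Amat.transpose from rfl]
    calc η' • (Amat * (P' * g' * P' * g' * P') * Amat.transpose)
        = Amat * (η' • (P' * g' * P' * g' * P')) * Amat.transpose := by
          rw [Matrix.mul_smul, Matrix.smul_mul]
      _ = -(Amat * P' * Amat.transpose) := by rw [hK']; simp [Matrix.mul_neg, Matrix.neg_mul, Matrix.mul_assoc]
  have hsub : (φ η - η') • X = 0 := by rw [sub_smul, h2, h3, sub_self]
  have h5 : (φ η - η') • (Amat * P' * Amat.transpose) = 0 := by
    have : Amat * P' * Amat.transpose = -(η' • X) := by rw [h3, neg_neg]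
    rw [this, smul_neg, smul_comm, hsub, smul_zero, neg_zero]
  -- P' = B * Pφ * Bᵀ
  have hPB : P' = Bmat * Pφ * Bmat.transpose := by
    ext a b
    rw [hP' a b, hB a (y b)]
    have h1 : ∀ i, br' (φ (x i)) (y b) = ∑ j, Bmat b j * br' (φ (x i)) (φ (x j)) := by
      intro i
      rw [hbr'.antisymm, hB b (φ (x i))]
      rw [← Finset.sum_neg_distrib]
      refine Finset.sum_congr rfl fun j _ => ?_
      rw [hbr'.antisymm (φ (x j))]
      ring
    simp_rw [h1, Finset.mul_sum]
    simp only [Matrix.mul_apply, hPφ, Matrix.map_apply, Matrix.transpose_apply, hP, hφ,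
      Finset.sum_mul]
    rw [Finset.sum_comm]
    exact Finset.sum_congr rfl fun i _ => Finset.sum_congr rfl fun j _ => by ring
  rw [hPB, hPA]
  calc (φ η - η') • (Bmat * (Amat * P' * Amat.transpose) * Bmat.transpose)
      = Bmat * ((φ η - η') • (Amat * P' * Amat.transpose)) * Bmat.transpose := by
        rw [Matrix.mul_smul, Matrix.smul_mul]
    _ = 0 := by rw [h5, Matrix.mul_zero, Matrix.zero_mul]
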